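/- Let m ≥ n ≥ 2 and let G be the ordered graph on vertices v_1, ..., v_{m+n} whose only edges are v_1 v_{m+1} and v_m v_{m+n}. Color the edges of the complete graph on the linearly ordered vertex set {1, ..., 2m+n-2} by making an edge red if it has an endpoint among the first m-1 vertices, and blue otherwise. Then this coloring contains no monochromatic ordered copy of G; consequently R(G) > 2m + n - 2. -/

import Mathlib

/-- A `t`-edge-coloring `c` of the complete graph on the ordered vertex set `Fin N`
contains a monochromatic ordered copy of the ordered graph `G` on `Fin M`. -/
def HasMonoCopy {M N t : ℕ} (G : SimpleGraph (Fin M)) (c : Fin N → Fin N → Fin t) : Prop :=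
  ∃ k : Fin t, ∃ f : Fin M → Fin N, StrictMono f ∧
    ∀ u v : Fin M, u < v → G.Adj u v → c (f u) (f v) = k

/-- The `t`-color ordered Ramsey number of the ordered graph `G`: the least `N` such that
every `t`-coloring of the edges of the complete graph on `Fin N` contains a monochromatic
ordered copy of `G`. -/
noncomputable def orderedRamsey {M : ℕ} (t : ℕ) (G : SimpleGraph (Fin M)) : ℕ :=
  sInf {N : ℕ | ∀ c : Fin N → Fin N → Fin t, HasMonoCopy G c}

/-- An interval coloring of an ordered graph with `k` parts, encoded as a monotone
surjection onto `Fin k` whose fibers (the parts, which are intervals of consecutive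
vertices) are independent sets. -/
def IsIntervalColoring {N k : ℕ} (G : SimpleGraph (Fin N)) (p : Fin N → Fin k) : Prop :=
  Monotone p ∧ Function.Surjective p ∧ ∀ u v : Fin N, G.Adj u v → p u ≠ p v

/-- The interval chromatic number of an ordered graph. -/
noncomputable def intervalChromatic {N : ℕ} (G : SimpleGraph (Fin N)) : ℕ :=
  sInf {k : ℕ | ∃ p : Fin N → Fin k, IsIntervalColoring G p}

lemma fin_strictMono_le {a b : ℕ} {f : Fin a → Fin b} (hf : StrictMono f) :
    ∀ d : ℕ, ∀ i j : Fin a, (j : ℕ) = (i : ℕ) + d → (f i : ℕ) + d ≤ (f j : ℕ) := by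
  intro d
  induction d with
  | zero =>
    intro i j h
    have : j = i := Fin.ext (by omega)
    simp [this]
  | succ d ih =>
    intro i j h
    have hj' : (j : ℕ) - 1 < a := by have := j.isLt; omega
    have h1 := ih i ⟨(j : ℕ) - 1, hj'⟩ (by simp only [Fin.val_mk]; omega)
    have h2 : f ⟨(j : ℕ) - 1, hj'⟩ < f j := hf (by rw [Fin.lt_def]; simp only [Fin.val_mk]; omega)
    rw [Fin.lt_def] at h2
    omega

lemma mono_copy_castLE {M N N' t : ℕ} (h : N' ≤ N) (G : SimpleGraph (Fin M))
    (c : Fin N → Fin N → Fin t)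
    (hcopy : HasMonoCopy G (fun i j => c (Fin.castLE h i) (Fin.castLE h j))) :
    HasMonoCopy G c := by
  obtain ⟨k, f, hf, hm⟩ := hcopy
  exact ⟨k, fun t => Fin.castLE h (f t),
    fun u v huv => (Fin.strictMono_castLE h) (hf huv),
    fun u v h1 h2 => hm u v h1 h2⟩

set_option maxHeartbeats 1000000 in
lemma copy_of_cross {m n N : ℕ} (hn : 2 ≤ n) (hnm : n ≤ m)
    (G : SimpleGraph (Fin (m + n)))
    (hG : G = SimpleGraph.fromEdgeSet
      {s((⟨0, by have := hn; omega⟩ : Fin (m + n)), (⟨m, by have := hn; omega⟩ : Fin (m + n))),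
       s((⟨m - 1, by have := hn; omega⟩ : Fin (m + n)), (⟨m + n - 1, by have := hn; omega⟩ : Fin (m + n)))})
    (c : Fin N → Fin N → Fin 2) (a cc b d : ℕ)
    (h1 : a + m ≤ cc) (h2 : cc < b) (h3 : b + n ≤ d) (h4 : d < N)
    (hcol : c ⟨a, by omega⟩ ⟨b, by omega⟩ = c ⟨cc, by omega⟩ ⟨d, by omega⟩) :
    HasMonoCopy G c := by
  set g : ℕ → ℕ := fun t => if t < m - 1 then a + t else if t = m - 1 then cc
      else if t < m + n - 1 then b + (t - m) else d with hgdef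
  have hglt : ∀ t : ℕ, g t < N := by
    intro t; simp only [hgdef]; split_ifs <;> omega
  set F : Fin (m + n) → Fin N := fun t => ⟨g t.val, hglt t.val⟩ with hF
  refine ⟨c ⟨a, by omega⟩ ⟨b, by omega⟩, F, ?_, ?_⟩
  · intro u v huv
    rw [Fin.lt_def] at huv
    rw [Fin.lt_def]
    simp only [hF, hgdef]
    have := u.isLt; have := v.isLt
    split_ifs <;> omega
  · intro u v huv hadj
    rw [hG] at hadj
    rw [SimpleGraph.fromEdgeSet_adj] at hadj
    simp only [Set.mem_insert_iff, Set.mem_singleton_iff, Sym2.eq_iff] at hadj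
    rw [Fin.lt_def] at huv
    obtain ⟨(⟨hu, hv⟩ | ⟨hu, hv⟩) | (⟨hu, hv⟩ | ⟨hu, hv⟩), hne⟩ := hadj
    · have hA : F u = ⟨a, by omega⟩ := by
        apply Fin.ext
        simp only [hF, hu, hgdef]
        split_ifs <;> omega
      have hB : F v = ⟨b, by omega⟩ := by
        apply Fin.ext
        simp only [hF, hv, hgdef]
        split_ifs <;> omega
      rw [hA, hB]
    · rw [hu, hv] at huv; simp only [Fin.val_mk] at huv; omega
    · have hA : F u = ⟨cc, by omega⟩ := by
        apply Fin.ext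
        simp only [hF, hu, hgdef]
        split_ifs <;> omega
      have hB : F v = ⟨d, by omega⟩ := by
        apply Fin.ext
        simp only [hF, hv, hgdef]
        split_ifs <;> omega
      rw [hA, hB]
      exact hcol.symm
    · rw [hu, hv] at huv; simp only [Fin.val_mk] at huv; omega

set_option maxHeartbeats 1000000 in
set_option maxRecDepth 8000 in
/-- Let `m ≥ n ≥ 2` and let `G` be the ordered graph on `v_1,…,v_{m+n}` whose only
edges are `v_1 v_{m+1}` and `v_m v_{m+n}`. The coloring of the complete graph on
`{1,…,2m+n-2}` making an edge red (`0`) iff it has an endpoint among the first `m-1`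
vertices, and blue (`1`) otherwise, has no monochromatic ordered copy of `G`;
consequently `R(G) > 2m + n - 2`. -/
theorem stmt8 {m n : ℕ} (hn : 2 ≤ n) (hnm : n ≤ m)
    (G : SimpleGraph (Fin (m + n)))
    (hG : G = SimpleGraph.fromEdgeSet
      {s((⟨0, by omega⟩ : Fin (m + n)), (⟨m, by omega⟩ : Fin (m + n))),
       s((⟨m - 1, by omega⟩ : Fin (m + n)), (⟨m + n - 1, by omega⟩ : Fin (m + n)))})
    (c : Fin (2 * m + n - 2) → Fin (2 * m + n - 2) → Fin 2)
    (hc : ∀ i j : Fin (2 * m + n - 2),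
      c i j = if (i : ℕ) < m - 1 ∨ (j : ℕ) < m - 1 then 0 else 1) :
    ¬ HasMonoCopy G c ∧ 2 * m + n - 2 < orderedRamsey 2 G := by
  have hnocopy : ¬ HasMonoCopy G c := by
    rintro ⟨k, f, hf, hmono⟩
    have haux := fin_strictMono_le hf
    have hadj1 : G.Adj ⟨0, by omega⟩ ⟨m, by omega⟩ := by
      rw [hG, SimpleGraph.fromEdgeSet_adj]
      refine ⟨Set.mem_insert _ _, fun h => ?_⟩
      rw [Fin.ext_iff] at h; simp at h; omega
    have hadj2 : G.Adj ⟨m - 1, by omega⟩ ⟨m + n - 1, by omega⟩ := by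
      rw [hG, SimpleGraph.fromEdgeSet_adj]
      refine ⟨Set.mem_insert_of_mem _ rfl, fun h => ?_⟩
      rw [Fin.ext_iff] at h; simp at h; omega
    have h01 := hmono ⟨0, by omega⟩ ⟨m, by omega⟩ (by rw [Fin.lt_def]; simp only [Fin.val_mk]; omega) hadj1
    have h23 := hmono ⟨m - 1, by omega⟩ ⟨m + n - 1, by omega⟩
      (by rw [Fin.lt_def]; simp only [Fin.val_mk]; omega) hadj2
    rw [hc] at h01 h23
    have h03 := haux (m + n - 1) ⟨0, by omega⟩ ⟨m + n - 1, by omega⟩ (by simp only [Fin.val_mk]; omega)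
    have h02 := haux (m - 1) ⟨0, by omega⟩ ⟨m - 1, by omega⟩ (by simp only [Fin.val_mk]; omega)
    have hlt3 := (f ⟨m + n - 1, by omega⟩).isLt
    have hi0 : ((f ⟨0, by omega⟩ : Fin _) : ℕ) < m - 1 := by omega
    have hi2 : ¬ ((f ⟨m - 1, by omega⟩ : Fin _) : ℕ) < m - 1 := by omega
    have hi3 : ¬ ((f ⟨m + n - 1, by omega⟩ : Fin _) : ℕ) < m - 1 := by omega
    rw [if_pos (Or.inl hi0)] at h01
    rw [if_neg (by push_neg; exact ⟨not_lt.mp hi2, not_lt.mp hi3⟩)] at h23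
    exact absurd (h01.trans h23.symm) (by decide)
  refine ⟨hnocopy, ?_⟩
  have hbig : ∀ c0 : Fin (7 * (m + n)) → Fin (7 * (m + n)) → Fin 2, HasMonoCopy G c0 := by
    intro c0
    have p0 : 0 < 7 * (m + n) := by omega
    have p1 : m + n < 7 * (m + n) := by omega
    have p2 : 2 * (m + n) < 7 * (m + n) := by omega
    have p3 : 3 * (m + n) < 7 * (m + n) := by omega
    have p4 : 4 * (m + n) < 7 * (m + n) := by omega
    have p5 : 5 * (m + n) < 7 * (m + n) := by omega
    set e0 := c0 ⟨0, p0⟩ ⟨3 * (m + n), p3⟩ with he0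
    set e1 := c0 ⟨m + n, p1⟩ ⟨4 * (m + n), p4⟩ with he1
    set e2 := c0 ⟨2 * (m + n), p2⟩ ⟨5 * (m + n), p5⟩ with he2
    have hpig : e0 = e1 ∨ e1 = e2 ∨ e0 = e2 := by
      by_cases h01 : e0 = e1
      · exact Or.inl h01
      by_cases h12 : e1 = e2
      · exact Or.inr (Or.inl h12)
      refine Or.inr (Or.inr (Fin.ext ?_))
      have a0 := e0.isLt; have a1 := e1.isLt; have a2 := e2.isLt
      have b01 : e0.val ≠ e1.val := fun h => h01 (Fin.ext h)
      have b12 : e1.val ≠ e2.val := fun h => h12 (Fin.ext h)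
      omega
    rcases hpig with h | h | h
    · exact copy_of_cross hn hnm G hG c0 0 (m + n) (3 * (m + n)) (4 * (m + n))
        (by omega) (by omega) (by omega) (by omega) h
    · exact copy_of_cross hn hnm G hG c0 (m + n) (2 * (m + n)) (4 * (m + n)) (5 * (m + n))
        (by omega) (by omega) (by omega) (by omega) h
    · exact copy_of_cross hn hnm G hG c0 0 (2 * (m + n)) (3 * (m + n)) (5 * (m + n))
        (by omega) (by omega) (by omega) (by omega) h
  rw [orderedRamsey]
  by_contra hle
  push_neg at hle
  have hne : {N : ℕ | ∀ c' : Fin N → Fin N → Fin 2, HasMonoCopy G c'}.Nonempty :=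
    ⟨7 * (m + n), hbig⟩
  have hmem : ∀ c' : Fin (sInf {N : ℕ | ∀ c' : Fin N → Fin N → Fin 2, HasMonoCopy G c'})
      → Fin (sInf {N : ℕ | ∀ c' : Fin N → Fin N → Fin 2, HasMonoCopy G c'}) → Fin 2,
      HasMonoCopy G c' := Nat.sInf_mem hne
  exact hnocopy (mono_copy_castLE hle G c
    (hmem (fun i j => c (Fin.castLE hle i) (Fin.castLE hle j))))
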